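/- arXiv:1402.3843 — 4 statements merged into one kernel-verified Lean document; each statement's English description precedes it below -/
import Mathlib

section
/- Every IP* subset of a group G intersects every IP set nontrivially, and the intersection of two IP* subsets of G is again IP*. -/
open Pointwise

/-- `FP φ` is the set of finite products `φ(i₁) ⋯ φ(i_k)` with `i₁ < ⋯ < i_k`. -/
def FP {G : Type*} [Group G] (φ : ℕ → G) : Set G :=
  {g | ∃ l : List ℕ, l ≠ [] ∧ l.Chain' (· < ·) ∧ (l.map φ).prod = g}

/-- A subset of `G` is an IP set if it contains `FP φ` for some sequence `φ`. -/
def IsIPSet {G : Type*} [Group G] (A : Set G) : Prop :=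
  ∃ φ : ℕ → G, FP φ ⊆ A

/-- A subset of `G` is IP* if it meets every IP set. -/
def IsIPStar {G : Type*} [Group G] (S : Set G) : Prop :=
  ∀ A : Set G, IsIPSet A → (S ∩ A).Nonempty

/-- Chain-lists with entries ≥ k give products in the FP of the dropped stream. -/
lemma list_prod_mem_hindmanFP {G : Type*} [Group G] :
    ∀ (l : List ℕ) (k : ℕ) (a : Stream' G), l ≠ [] → l.Chain' (· < ·) →
      (∀ i ∈ l, k ≤ i) → (l.map a).prod ∈ Hindman.FP (a.drop k) := by
  intro l
  induction l with
  | nil => intro _ _ h; exact absurd rfl h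
  | cons i l ih =>
    intro k a _ hc hk
    rcases List.eq_nil_or_concat l with rfl | _
    · erw [List.map_cons, List.map_nil, List.prod_cons, List.prod_nil, mul_one]
      have h : a i = (a.drop k).get (i - k) := by
        rw [Stream'.get_drop]
        show a i = a.get (k + (i - k))
        congr 1
        exact (Nat.add_sub_cancel' (hk i List.mem_cons_self)).symm
      rw [h]
      exact Hindman.FP.singleton _ _
    · have hne : l ≠ [] := by rintro rfl; simp_all
      have hlt : ∀ j ∈ l, i < j := by
        intro j hj
        rcases l with _ | ⟨j', l'⟩
        · simp at hj
        · have h1 : i < j' := (List.isChain_cons_cons.mp hc).1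
          rcases List.mem_cons.mp hj with rfl | hj
          · exact h1
          · exact h1.trans ((List.pairwise_cons.mp
                (List.isChain_iff_pairwise.mp (List.isChain_cons_cons.mp hc).2)).1 j hj)
      have hm := ih (i + 1) a hne (hc.tail) (fun j hj => hlt j hj)
      have key : a i * (l.map a).prod ∈ Hindman.FP (a.drop i) := by
      -- head of drop i is a i, tail of drop i is drop (i+1)
        have h1 : (a.drop i).head = a i := by
          show a.get (0 + i) = a i
          rw [Nat.zero_add]
          rfl
        have h2 : (a.drop i).tail = a.drop (i + 1) := by
          ext n
          show a.get (n + 1 + i) = a.get (n + (i + 1))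
          congr 1
          omega
        rw [← h1]
        exact Hindman.FP.cons _ _ (h2 ▸ hm)
      have hik : k ≤ i := hk i List.mem_cons_self
      have hd : (a.drop k).drop (i - k) = a.drop i := by
        have h : i - k + k = i := Nat.sub_add_cancel hik
        rw [Stream'.drop_drop, Nat.add_sub_cancel' hik]
      erw [List.map_cons, List.prod_cons]
      exact Hindman.FP_drop_subset_FP (a.drop k) (i - k) (hd ▸ key)

lemma hindmanFP_subset_FP {G : Type*} [Group G] (φ : ℕ → G) :
    Hindman.FP (φ : Stream' G) ⊆ FP φ := by
  intro g hg
  induction hg with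
  | head' a => exact ⟨[0], by simp, by simp [List.Chain'], by exact List.prod_singleton⟩
  | tail' a m h ih =>
    obtain ⟨l, hne, hc, hp⟩ := ih
    refine ⟨l.map (· + 1), by simpa using hne, ?_, ?_⟩
    · exact List.isChain_map_of_isChain _ (fun h => by omega) hc
    · erw [List.map_map, ← hp]
      congr 1
  | cons' a m h ih =>
    obtain ⟨l, hne, hc, hp⟩ := ih
    refine ⟨0 :: l.map (· + 1), by simp, ?_, ?_⟩
    · refine List.isChain_cons.mpr ?_
      constructor
      · intro y hy
        rcases l with _ | ⟨j, l'⟩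
        · simp at hy
        · simp at hy
          omega
      · exact List.isChain_map_of_isChain _ (fun h => by omega) hc
    · erw [List.map_cons, List.prod_cons, List.map_map]
      rw [← hp]
      rfl

lemma FP_subset_hindmanFP {G : Type*} [Group G] (φ : ℕ → G) :
    FP φ ⊆ Hindman.FP (φ : Stream' G) := by
  rintro g ⟨l, hne, hc, rfl⟩
  have h := list_prod_mem_hindmanFP l 0 (φ : Stream' G) hne hc (fun i _ => Nat.zero_le i)
  have hd : Stream'.drop 0 (φ : Stream' G) = (φ : Stream' G) := by
    ext n; show φ (n + 0) = φ n; rw [Nat.add_zero]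
  rwa [hd] at h

/-- Every IP* set intersects every IP set nontrivially, and the intersection of two
IP* subsets of `G` is again IP*. -/
theorem ipStar_inter {G : Type*} [Group G] :
    (∀ S A : Set G, IsIPStar S → IsIPSet A → (S ∩ A).Nonempty) ∧
    (∀ S₁ S₂ : Set G, IsIPStar S₁ → IsIPStar S₂ → IsIPStar (S₁ ∩ S₂)) := by
  constructor
  · exact fun S A hS hA => hS A hA
  · intro S₁ S₂ hS₁ hS₂ A ⟨φ, hφ⟩
    set F : Set G := Hindman.FP (φ : Stream' G) with hF
    have hcov : Hindman.FP (φ : Stream' G) ⊆ ⋃₀ {S₁ ∩ F, S₁ᶜ ∩ F} := by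
      intro x hx
      by_cases h : x ∈ S₁
      · exact ⟨S₁ ∩ F, by simp, h, hx⟩
      · exact ⟨S₁ᶜ ∩ F, by simp, h, hx⟩
    obtain ⟨c, hc, b, hb⟩ := Hindman.FP_partition_regular (φ : Stream' G)
      {S₁ ∩ F, S₁ᶜ ∩ F} ((Set.finite_singleton _).insert _) hcov
    have hIPb : IsIPSet (Hindman.FP b) := ⟨b, FP_subset_hindmanFP b⟩
    rcases hc with rfl | rfl
    · obtain ⟨x, hx₂, hxb⟩ := hS₂ _ hIPb
      have hx : x ∈ S₁ ∩ F := hb hxb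
      exact ⟨x, ⟨hx.1, hx₂⟩, hφ (hindmanFP_subset_FP φ hx.2)⟩
    · obtain ⟨x, hx₁, hxb⟩ := hS₁ _ hIPb
      exact absurd hx₁ (hb hxb).1
end

section
/- If S ⊆ G is an IP* set, then finitely many left translates of S cover G; that is, there exist g₁,…,g_n ∈ G with G = g₁S ∪ ⋯ ∪ g_nS. -/
open Pointwise

/-- If `S` is IP*, then finitely many left translates of `S` cover `G`. -/
theorem ipStar_finitely_many_translates_cover {G : Type*} [Group G] (S : Set G)
    (hS : IsIPStar S) :
    ∃ t : Finset G, (⋃ g ∈ t, g • S) = Set.univ := by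
  classical
  by_contra hcov
  push_neg at hcov
  have hex : ∀ t : Finset G, ∃ y : G, ∀ g ∈ t, y ∉ g • S := by
    intro t
    obtain ⟨y, hy⟩ := Set.ne_univ_iff_exists_notMem _ |>.mp (hcov t)
    exact ⟨y, fun g hg hmem => hy (Set.mem_biUnion hg hmem)⟩
  choose x hx using hex
  set P : ℕ → Finset G := fun n => Nat.rec (∅ : Finset G)
    (fun _ Q => insert (x (insert 1 Q⁻¹)) (Q ∪ Q.image (· * x (insert 1 Q⁻¹)))) n with hP
  have hPsucc : ∀ n, P (n + 1)
      = insert (x (insert 1 (P n)⁻¹)) (P n ∪ (P n).image (· * x (insert 1 (P n)⁻¹))) :=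
    fun n => rfl
  set φ : ℕ → G := fun n => x (insert 1 (P n)⁻¹) with hφ
  have hxS : ∀ n, φ n ∉ S := by
    intro n
    have := hx (insert 1 (P n)⁻¹) 1 (Finset.mem_insert_self _ _)
    simpa using this
  have hxP : ∀ n, ∀ p ∈ P n, p * φ n ∉ S := by
    intro n p hp hmem
    have hg : p⁻¹ ∈ insert 1 (P n)⁻¹ :=
      Finset.mem_insert_of_mem (by simpa using Finset.inv_mem_inv hp)
    exact hx _ _ hg ⟨p * φ n, hmem, by simp [smul_eq_mul, mul_assoc]; rfl⟩
  have hmono : ∀ m n, m ≤ n → P m ⊆ P n := by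
    intro m n hmn
    induction n with
    | zero => simp [Nat.le_zero.mp hmn]
    | succ k ih =>
      rcases Nat.lt_or_ge m (k + 1) with h | h
      · intro a ha
        rw [hPsucc k]
        exact Finset.mem_insert_of_mem (Finset.mem_union_left _ (ih (Nat.lt_succ_iff.mp h) ha))
      · have : m = k + 1 := le_antisymm hmn h
        subst this; exact Finset.Subset.rfl
  have hPS : ∀ n, ∀ g ∈ P n, g ∉ S := by
    intro n
    induction n with
    | zero => simp [hP]
    | succ k ih =>
      intro g hg
      rw [hPsucc k] at hg
      rcases Finset.mem_insert.mp hg with h | h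
      · subst h; exact hxS k
      · rcases Finset.mem_union.mp h with h | h
        · exact ih g h
        · obtain ⟨p, hp, rfl⟩ := Finset.mem_image.mp h
          exact hxP k p hp
  have hFP : ∀ l : List ℕ, l.Chain' (· < ·) → l ≠ [] →
      ∀ n, (∀ i ∈ l, i < n) → (l.map φ).prod ∈ P n := by
    intro l
    induction l using List.reverseRecOn with
    | nil => intro _ h; exact absurd rfl h
    | append_singleton l m ih =>
      intro hch _ n hlt
      have hpw := List.isChain_iff_pairwise.mp hch
      rw [List.pairwise_append] at hpw
      obtain ⟨hpw1, _, hpw3⟩ := hpw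
      have hmn : m < n := hlt m (by simp)
      rcases eq_or_ne l [] with rfl | hl
      · have : φ m ∈ P (m + 1) := by
          rw [hPsucc m]; exact Finset.mem_insert_self _ _
        simpa using hmono _ _ hmn this
      · have hlm : ∀ i ∈ l, i < m := fun i hi => hpw3 i hi m (by simp)
        have hprev : (l.map φ).prod ∈ P m :=
          ih (List.isChain_iff_pairwise.mpr hpw1) hl m hlm
        have : (l.map φ).prod * φ m ∈ P (m + 1) := by
          rw [hPsucc m]
          exact Finset.mem_insert_of_mem (Finset.mem_union_right _
            (Finset.mem_image.mpr ⟨_, hprev, rfl⟩))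
        have h2 : ((l ++ [m]).map φ).prod = (l.map φ).prod * φ m := by
          simp
        rw [h2]
        exact hmono _ _ hmn this
  have hsub : FP φ ⊆ Sᶜ := by
    rintro g ⟨l, hne, hch, rfl⟩
    obtain ⟨n, hn⟩ := l.toFinset.exists_nat_subset_range
    have hlt : ∀ i ∈ l, i < n := fun i hi =>
      Finset.mem_range.mp (hn (List.mem_toFinset.mpr hi))
    exact hPS n _ (hFP l hch hne n hlt)
  obtain ⟨z, hz1, hz2⟩ := hS Sᶜ ⟨φ, hsub⟩
  exact hz2 hz1
end

section
/- Let G be a locally compact second countable group with left Haar measure m and left Følner sequence Φ. If a measurable subset R of G has positive lower density with respect to every left Følner sequence in G, then R is syndetic, i.e. there is a compact set F ⊆ G with FR = G. -/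
open MeasureTheory Filter Topology Pointwise

/-- A left Følner sequence: a sequence of compact positive-measure subsets such that
`m(Φ_N △ gΦ_N)/m(Φ_N) → 0` for every `g ∈ G`. -/
def IsFolnerSeq {G : Type*} [Group G] [TopologicalSpace G] [MeasurableSpace G]
    (m : Measure G) (Φ : ℕ → Set G) : Prop :=
  (∀ N, IsCompact (Φ N)) ∧ (∀ N, 0 < m (Φ N)) ∧
    ∀ g : G, Tendsto (fun N => (m (symmDiff (Φ N) (g • Φ N))).toReal / (m (Φ N)).toReal)
      atTop (𝓝 0)

/-- The lower density of a measurable set `E ⊆ G` with respect to a Følner sequence `Φ`. -/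
noncomputable def lowerDensity {G : Type*} [Group G] [TopologicalSpace G] [MeasurableSpace G]
    (m : Measure G) (Φ : ℕ → Set G) (E : Set G) : ℝ :=
  liminf (fun N => (m (E ∩ Φ N)).toReal / (m (Φ N)).toReal) atTop

/-- Right translation scales a Haar measure by a positive constant (the modular function). -/
lemma mul_right_scale {G : Type*} [Group G] [TopologicalSpace G]
    [IsTopologicalGroup G] [LocallyCompactSpace G] [SecondCountableTopology G]
    [MeasurableSpace G] [BorelSpace G] (m : Measure G) [m.IsHaarMeasure] (h : G) :
    ∃ c : NNReal, 0 < c ∧ ∀ A : Set G,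
      m (A * {h}) = (c : ENNReal) * m A := by
  set ν := Measure.map (· * h⁻¹) m with hν
  have hHaar : ν.IsHaarMeasure := Measure.isHaarMeasure_map_mul_right m h⁻¹
  refine ⟨Measure.haarScalarFactor ν m, Measure.haarScalarFactor_pos_of_isHaarMeasure _ _,
    fun A => ?_⟩
  have h1 : ν A = m (A * {h}) := by
    have : ν A = m ((MeasurableEquiv.mulRight h⁻¹) ⁻¹' A) :=
      (MeasurableEquiv.mulRight h⁻¹).map_apply A
    rw [this]
    congr 1
    ext x
    simp [Set.mul_singleton, eq_comm, eq_mul_inv_iff_mul_eq]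
  have h2 : ν = (Measure.haarScalarFactor ν m : ENNReal) • m :=
    Measure.isMulLeftInvariant_eq_smul ν m
  rw [← h1]; conv_lhs => rw [h2]
  simp

/-- If a measurable subset `R` of `G` has positive lower density with respect to every left
Følner sequence, then `R` is syndetic: there is a compact set `F` with `F * R = G`. -/
theorem syndetic_of_positive_lowerDensity {G : Type*} [Group G] [TopologicalSpace G]
    [IsTopologicalGroup G] [LocallyCompactSpace G] [SecondCountableTopology G]
    [MeasurableSpace G] [BorelSpace G] (m : Measure G) [m.IsHaarMeasure]
    (Φ : ℕ → Set G) (hΦ : IsFolnerSeq m Φ)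
    (R : Set G) (hR : MeasurableSet R)
    (hpos : ∀ Ψ : ℕ → Set G, IsFolnerSeq m Ψ → 0 < lowerDensity m Ψ R) :
    ∃ F : Set G, IsCompact F ∧ F * R = Set.univ := by
  obtain ⟨hcpt, hposm, hfol⟩ := hΦ
  by_contra hcon
  push_neg at hcon
  -- for each N pick h N not in (Φ N)⁻¹ * R
  have hsel : ∀ N : ℕ, ∃ h : G, h ∉ (Φ N)⁻¹ * R := by
    intro N
    have hne := hcon ((Φ N)⁻¹) (hcpt N).inv
    rw [← Set.ne_univ_iff_exists_notMem]
    exact hne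
  choose h hh using hsel
  -- the translated sequence
  set Ψ : ℕ → Set G := fun N => Φ N * {h N} with hΨ
  -- scaling constants
  have hscale : ∀ N : ℕ, ∃ c : NNReal, 0 < c ∧ ∀ A : Set G,
      m (A * {h N}) = (c : ENNReal) * m A := fun N => mul_right_scale m (h N)
  choose c hcpos hcm using hscale
  -- Ψ is compact
  have hΨcpt : ∀ N, IsCompact (Ψ N) := fun N => (hcpt N).mul isCompact_singleton
  -- Ψ has positive measure
  have hΨpos : ∀ N, 0 < m (Ψ N) := by
    intro N
    rw [hcm N _]
    exact ENNReal.mul_pos (by exact_mod_cast (hcpos N).ne') (hposm N).ne'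
  -- translation identities
  have hsmul : ∀ (g : G) (N : ℕ), g • Ψ N = (g • Φ N) * {h N} := by
    intro g N
    simp only [hΨ]
    rw [smul_mul_assoc]
  have hsymm : ∀ (g : G) (N : ℕ),
      symmDiff (Ψ N) (g • Ψ N) = symmDiff (Φ N) (g • Φ N) * {h N} := by
    intro g N
    rw [hsmul]
    simp only [hΨ, Set.mul_singleton]
    exact (Set.image_symmDiff (mul_left_injective (h N)) _ _).symm
  -- the ratio is the same
  have hratio : ∀ (g : G) (N : ℕ),
      (m (symmDiff (Ψ N) (g • Ψ N))).toReal / (m (Ψ N)).toReal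
        = (m (symmDiff (Φ N) (g • Φ N))).toReal / (m (Φ N)).toReal := by
    intro g N
    rw [hsymm, hcm N _, hcm N _]
    have hfin1 : m (symmDiff (Φ N) (g • Φ N)) ≠ ⊤ := by
      have : symmDiff (Φ N) (g • Φ N) ⊆ Φ N ∪ g • Φ N := symmDiff_le_sup
      refine ne_top_of_le_ne_top ?_ (measure_mono this)
      exact (((hcpt N).union ((hcpt N).smul g)).measure_lt_top).ne
    have hfin2 : m (Φ N) ≠ ⊤ := (hcpt N).measure_lt_top.ne
    rw [ENNReal.toReal_mul, ENNReal.toReal_mul]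
    rw [mul_div_mul_left]
    simp only [ENNReal.coe_toReal]
    exact_mod_cast (hcpos N).ne'
  -- Ψ is a Følner sequence
  have hΨfol : IsFolnerSeq m Ψ := by
    refine ⟨hΨcpt, hΨpos, fun g => ?_⟩
    have := hfol g
    simpa only [hratio g] using this
  -- but R ∩ Ψ N = ∅
  have hempty : ∀ N, R ∩ Ψ N = ∅ := by
    intro N
    ext x
    simp only [Set.mem_inter_iff, Set.mem_empty_iff_false, iff_false, not_and]
    intro hxR hxPsi
    have hxPsi2 : x ∈ Φ N * {h N} := hxPsi
    rw [Set.mul_singleton] at hxPsi2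
    obtain ⟨y, hy, rfl⟩ := hxPsi2
    exact hh N ⟨y⁻¹, Set.inv_mem_inv.2 hy, y * h N, hxR, by group⟩
  have hz := hpos Ψ hΨfol
  rw [lowerDensity] at hz
  have : (fun N => (m (R ∩ Ψ N)).toReal / (m (Ψ N)).toReal) = fun _ => (0 : ℝ) := by
    funext N
    rw [hempty N]
    simp
  rw [this] at hz
  simp at hz
end

section
/- If S₁ and S₂ are commuting measure-preserving actions of G on a probability space (X, ℬ, μ) and S₂ is ergodic, then Eig(S₂) ⊆ Eig(S₂S₁), where S₂S₁ denotes the action g ↦ S₂^g S₁^g. -/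
open MeasureTheory Filter Topology Pointwise

/-- A measurable, measure-preserving action of `G` on `(X, μ)`. -/
def IsMeasurableAction {G X : Type*} [Group G] [MeasurableSpace G] [MeasurableSpace X]
    (T : G → X → X) (μ : Measure X) : Prop :=
  Measurable (fun p : G × X => T p.1 p.2) ∧ (∀ x, T 1 x = x) ∧
    (∀ g h x, T g (T h x) = T (g * h) x) ∧ ∀ g, MeasurePreserving (T g) μ μ

/-- An action is ergodic if every invariant measurable set is null or conull. -/
def IsErgodicAction {G X : Type*} [MeasurableSpace X] (T : G → X → X) (μ : Measure X) :
    Prop :=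
  ∀ s : Set X, MeasurableSet s → (∀ g, T g ⁻¹' s = s) → μ s = 0 ∨ μ s = 1

/-- `F ∈ L²(μ)` is an eigenfunction of the action `T` if its orbit is contained in a
finite-dimensional `T`-invariant subspace of `L²`. -/
def IsEigenfunction {G X : Type*} [MeasurableSpace X] {μ : Measure X}
    (T : G → X → X) (F : Lp ℝ 2 μ) : Prop :=
  ∃ V : Submodule ℝ (Lp ℝ 2 μ), FiniteDimensional ℝ ↥V ∧
    (∀ g : G, ∀ h : Lp ℝ 2 μ, h ∈ V → ∀ h' : Lp ℝ 2 μ,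
      (h' : X → ℝ) =ᵐ[μ] (fun x => h (T g x)) → h' ∈ V) ∧
    F ∈ V

/-- `Eig(T)`: the closed subspace of `L²(μ)` spanned by the eigenfunctions of `T`. -/
noncomputable def eigSpace {G X : Type*} [MeasurableSpace X] (μ : Measure X)
    (T : G → X → X) : Set (Lp ℝ 2 μ) :=
  closure (Submodule.span ℝ {F : Lp ℝ 2 μ | IsEigenfunction T F} : Set (Lp ℝ 2 μ))

open Set RealInnerProductSpace

/-! ### Auxiliary material -/

/-- The Koopman operator of a measure-preserving map, as a linear isometry of `L²`. -/
noncomputable def EigAux.koop {X : Type*} [MeasurableSpace X] {μ : Measure X} {T : X → X}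
    (hT : MeasurePreserving T μ μ) :
    Lp ℝ 2 μ →ₗᵢ[ℝ] Lp ℝ 2 μ where
  toFun f := Lp.compMeasurePreserving T hT f
  map_add' f g := map_add _ f g
  map_smul' c f := by
    apply Lp.ext
    filter_upwards [Lp.coeFn_compMeasurePreserving (c • f) hT,
      Lp.coeFn_compMeasurePreserving f hT,
      Lp.coeFn_smul c (Lp.compMeasurePreserving T hT f),
      hT.quasiMeasurePreserving.ae_eq_comp (Lp.coeFn_smul c f)] with x h1 h2 h3 h4
    simp only [Function.comp_apply, Pi.smul_apply, smul_eq_mul, RingHom.id_apply] at *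
    rw [h3, h1, h4, h2]
  norm_map' f := Lp.norm_compMeasurePreserving f hT

namespace EigAux

theorem koop_coeFn {X : Type*} [MeasurableSpace X] {μ : Measure X} {T : X → X}
    (hT : MeasurePreserving T μ μ) (f : Lp ℝ 2 μ) :
    (koop hT f : X → ℝ) =ᵐ[μ] fun x => f (T x) :=
  Lp.coeFn_compMeasurePreserving f hT

theorem koop_inner {X : Type*} [MeasurableSpace X] {μ : Measure X} {T : X → X}
    (hT : MeasurePreserving T μ μ) (f g : Lp ℝ 2 μ) :
    ⟪koop hT f, koop hT g⟫ = ⟪f, g⟫ :=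
  (koop hT).inner_map_map f g

theorem coeFn_sum_smul {X : Type*} [MeasurableSpace X] {μ : Measure X}
    {ι : Type*} (s : Finset ι) (c : ι → ℝ) (f : ι → Lp ℝ 2 μ) :
    ((∑ i ∈ s, c i • f i : Lp ℝ 2 μ) : X → ℝ) =ᵐ[μ] fun x => ∑ i ∈ s, c i * f i x := by
  classical
  induction s using Finset.induction_on with
  | empty => simp only [Finset.sum_empty]; exact Lp.coeFn_zero ℝ 2 μ
  | insert a s hns ih =>
    rw [Finset.sum_insert hns]
    filter_upwards [Lp.coeFn_add (c a • f a) (∑ i ∈ s, c i • f i), Lp.coeFn_smul (c a) (f a), ih]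
      with x h1 h2 h3
    simp only [h1, Pi.add_apply, h2, Pi.smul_apply, smul_eq_mul, h3, Finset.sum_insert hns]

theorem gram_rotate {n : ℕ} (A : Matrix (Fin n) (Fin n) ℝ) (hA : A * A.transpose = 1)
    (u w : Fin n → ℝ) :
    ∑ i, (∑ a, A a i * u a) * (∑ b, A b i * w b) = ∑ a, u a * w a := by
  have key : ∀ a b, ∑ i, A a i * A b i = if a = b then 1 else 0 := by
    intro a b
    have := congr_fun (congr_fun hA a) b
    simpa [Matrix.mul_apply, Matrix.one_apply, Matrix.transpose_apply] using this
  calc ∑ i, (∑ a, A a i * u a) * (∑ b, A b i * w b)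
      = ∑ i, ∑ a, ∑ b, (A a i * A b i) * (u a * w b) := by
        refine Finset.sum_congr rfl fun i _ => ?_
        rw [Finset.sum_mul_sum]
        exact Finset.sum_congr rfl fun a _ => Finset.sum_congr rfl fun b _ => by ring
    _ = ∑ a, ∑ b, (∑ i, A a i * A b i) * (u a * w b) := by
        rw [Finset.sum_comm]
        refine Finset.sum_congr rfl fun a _ => ?_
        rw [Finset.sum_comm]
        refine Finset.sum_congr rfl fun b _ => ?_
        rw [Finset.sum_mul]
    _ = ∑ a, u a * w a := by
        refine Finset.sum_congr rfl fun a _ => ?_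
        rw [Finset.sum_eq_single a]
        · rw [key a a]; simp
        · intro b _ hb
          rw [key a b, if_neg (Ne.symm hb)]; ring
        · intro h; exact absurd (Finset.mem_univ a) h

section main

variable {G X : Type*} [Group G] [TopologicalSpace G]
    [IsTopologicalGroup G] [LocallyCompactSpace G] [SecondCountableTopology G]
    [MeasurableSpace G] [BorelSpace G]
    [MeasurableSpace X] {μ : Measure X} [IsProbabilityMeasure μ]
    {S : G → X → X}

/-- A measurable set which is a.e. invariant under every element of an ergodic action is
null or conull. -/
theorem null_or_conull (hS : IsMeasurableAction S μ) (herg : IsErgodicAction S μ)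
    {A : Set X} (hA : MeasurableSet A)
    (hinv : ∀ g, ∀ᵐ x ∂μ, (S g x ∈ A ↔ x ∈ A)) : μ A = 0 ∨ μ A = 1 := by
  classical
  set lam : Measure G := MeasureTheory.Measure.haar with hlam
  set M : Set (G × X) :=
    symmDiff ((fun p : G × X => S p.1 p.2) ⁻¹' A) (Prod.snd ⁻¹' A) with hM
  have hMmeas : MeasurableSet M :=
    MeasurableSet.symmDiff (hS.1 hA) (measurable_snd hA)
  have hMnull : (lam.prod μ) M = 0 := by
    rw [Measure.measure_prod_null hMmeas]
    refine Filter.Eventually.of_forall fun g => ?_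
    show μ (Prod.mk g ⁻¹' M) = 0
    have : (Prod.mk g ⁻¹' M) = symmDiff ((fun x => S g x) ⁻¹' A) A := by
      ext x; simp [hM, Set.mem_symmDiff]
    rw [this, measure_symmDiff_eq_zero_iff, eventuallyEq_set]
    exact hinv g
  have hN : MeasurableSet (Prod.swap ⁻¹' M : Set (X × G)) := hMmeas.preimage measurable_swap
  have hNnull : (μ.prod lam) (Prod.swap ⁻¹' M) = 0 := by
    have hmap := MeasureTheory.Measure.prod_swap (μ := μ) (ν := lam)
    have : (μ.prod lam) (Prod.swap ⁻¹' M) = Measure.map Prod.swap (μ.prod lam) M := by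
      rw [Measure.map_apply measurable_swap hMmeas]
    rw [this, hmap, hMnull]
  have hsec : ∀ᵐ x ∂μ, lam (Prod.mk x ⁻¹' (Prod.swap ⁻¹' M)) = 0 := by
    rw [Measure.measure_prod_null hN] at hNnull
    exact hNnull
  set B : Set X := {x | lam {g : G | S g x ∉ A} = 0} with hB
  have hBmeas : MeasurableSet B := by
    have h1 : MeasurableSet {p : X × G | S p.2 p.1 ∉ A} := by
      have : Measurable fun p : X × G => S p.2 p.1 :=
        hS.1.comp (measurable_snd.prodMk measurable_fst)
      exact (this hA).compl
    have := measurable_measure_prodMk_left (ν := lam) h1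
    exact this (MeasurableSet.singleton 0)
  have hBinv : ∀ g, S g ⁻¹' B = B := by
    intro h
    ext x
    show lam {g : G | S g (S h x) ∉ A} = 0 ↔ lam {g : G | S g x ∉ A} = 0
    have key : {g : G | S g (S h x) ∉ A} = (fun g => g * h) ⁻¹' {g : G | S g x ∉ A} := by
      ext g; simp [hS.2.2.1 g h x]
    rw [key]
    exact measure_mul_right_null lam h
  have herg' := herg B hBmeas hBinv
  have hlamuniv : lam (univ : Set G) ≠ 0 := by
    have : (interior (univ : Set G)).Nonempty := by simp
    exact (Measure.measure_pos_of_nonempty_interior lam this).ne'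
  have hae : ∀ᵐ x ∂μ, (x ∈ B ↔ x ∈ A) := by
    filter_upwards [hsec] with x hx
    have hxsec : lam {g : G | ¬(S g x ∈ A ↔ x ∈ A)} = 0 := by
      have : (Prod.mk x ⁻¹' (Prod.swap ⁻¹' M)) = {g : G | ¬(S g x ∈ A ↔ x ∈ A)} := by
        ext g; simp [hM, Set.mem_symmDiff]; tauto
      rwa [this] at hx
    constructor
    · intro hxB
      by_contra hxA
      have : (univ : Set G) ⊆ {g : G | S g x ∉ A} ∪ {g : G | ¬(S g x ∈ A ↔ x ∈ A)} := by
        intro g _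
        by_cases hg : S g x ∈ A
        · right; simp [hg, hxA]
        · left; exact hg
      have hle := measure_mono (μ := lam) this
      have hz : lam ({g : G | S g x ∉ A} ∪ {g : G | ¬(S g x ∈ A ↔ x ∈ A)}) = 0 :=
        measure_union_null hxB hxsec
      exact (hlamuniv (le_antisymm (hle.trans_eq hz) zero_le)).elim
    · intro hxA
      show lam {g : G | S g x ∉ A} = 0
      have : {g : G | S g x ∉ A} ⊆ {g : G | ¬(S g x ∈ A ↔ x ∈ A)} := by
        intro g hg; simp only [mem_setOf_eq] at *; tauto
      exact measure_mono_null this hxsec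
  have : μ A = μ B := by
    apply measure_congr
    rw [eventuallyEq_set]
    filter_upwards [hae] with x hx using hx.symm
  rw [this]; exact herg'

/-- A measurable function which is a.e. invariant under every element of an ergodic action
is a.e. constant. -/
theorem ae_eq_const_of_invariant (hS : IsMeasurableAction S μ) (herg : IsErgodicAction S μ)
    {φ : X → ℝ} (hφ : Measurable φ)
    (hinv : ∀ g, (fun x => φ (S g x)) =ᵐ[μ] φ) :
    ∃ c : ℝ, φ =ᵐ[μ] fun _ => c := by
  classical
  set A : ℝ → Set X := fun q => {x | q < φ x} with hA
  have hAmeas : ∀ q, MeasurableSet (A q) := fun q => measurableSet_lt measurable_const hφ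
  have hP : ∀ q, μ (A q) = 0 ∨ μ (A q) = 1 := by
    intro q
    refine null_or_conull hS herg (hAmeas q) fun g => ?_
    filter_upwards [hinv g] with x hx
    simp only [hA, mem_setOf_eq]
    rw [show φ (S g x) = φ x from hx]
  have hmono : ∀ {q r : ℝ}, q ≤ r → A r ⊆ A q := by
    intro q r hqr x hx; exact lt_of_le_of_lt hqr hx
  have hex1 : ∃ q : ℝ, μ (A q) = 1 := by
    by_contra hcon
    push_neg at hcon
    have h0 : ∀ n : ℕ, μ (A (-(n : ℝ))) = 0 := fun n =>
      (hP _).resolve_right (hcon _)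
    have huniv : (univ : Set X) ⊆ ⋃ n : ℕ, A (-(n : ℝ)) := by
      intro x _
      obtain ⟨n, hn⟩ := exists_nat_gt (-φ x)
      exact mem_iUnion.2 ⟨n, by simp only [hA, mem_setOf_eq]; linarith⟩
    have := measure_mono_null huniv (measure_iUnion_null h0)
    simp at this
  have hex0 : ∃ q : ℝ, μ (A q) = 0 := by
    by_contra hcon
    push_neg at hcon
    have h1 : ∀ n : ℕ, μ (A (n : ℝ))ᶜ = 0 := by
      intro n
      have h := (hP (n : ℝ)).resolve_left (hcon _)
      rw [measure_compl (hAmeas _) (measure_ne_top μ _), h]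
      simp
    have huniv : (univ : Set X) ⊆ ⋃ n : ℕ, (A (n : ℝ))ᶜ := by
      intro x _
      obtain ⟨n, hn⟩ := exists_nat_gt (φ x)
      exact mem_iUnion.2 ⟨n, by simp only [hA, mem_setOf_eq, compl_setOf, not_lt]; linarith⟩
    have := measure_mono_null huniv (measure_iUnion_null h1)
    simp at this
  obtain ⟨q1, hq1⟩ := hex1
  obtain ⟨q0, hq0⟩ := hex0
  set Sgood : Set ℝ := {q : ℝ | μ (A q) = 1} with hSgood
  have hSne : Sgood.Nonempty := ⟨q1, hq1⟩
  have hSbdd : BddAbove Sgood := by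
    refine ⟨q0, fun q hq => ?_⟩
    by_contra hlt
    push_neg at hlt
    have : μ (A q) ≤ μ (A q0) := measure_mono (hmono hlt.le)
    rw [hq, hq0] at this
    exact (by simp at this : False)
  set c : ℝ := sSup Sgood with hc
  have hgt : μ {x | c < φ x} = 0 := by
    have hsub : {x | c < φ x} ⊆ ⋃ q : ℚ, {x | c < (q : ℝ) ∧ x ∈ A (q : ℝ)} := by
      intro x hx
      have hx' : c < φ x := hx
      obtain ⟨q, hq1, hq2⟩ := exists_rat_btwn hx'
      exact mem_iUnion.2 ⟨q, hq1, hq2⟩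
    refine measure_mono_null hsub (measure_iUnion_null fun q => ?_)
    by_cases hcq : c < (q : ℝ)
    · have hq0 : μ (A (q : ℝ)) = 0 := by
        refine (hP _).resolve_right fun h1 => ?_
        exact absurd (le_csSup hSbdd h1) (not_le.2 hcq)
      exact measure_mono_null (fun x hx => hx.2) hq0
    · exact measure_mono_null (fun x hx => (hcq hx.1).elim) (measure_empty (μ := μ))
  have hlt : μ {x | φ x < c} = 0 := by
    have hsub : {x | φ x < c} ⊆ ⋃ q : ℚ, {x | (q : ℝ) < c ∧ x ∈ (A (q : ℝ))ᶜ} := by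
      intro x hx
      have hx' : φ x < c := hx
      obtain ⟨q, hq1, hq2⟩ := exists_rat_btwn hx'
      refine mem_iUnion.2 ⟨q, hq2, ?_⟩
      simp only [hA, mem_compl_iff, mem_setOf_eq, not_lt]
      exact hq1.le
    refine measure_mono_null hsub (measure_iUnion_null fun q => ?_)
    by_cases hcq : (q : ℝ) < c
    · obtain ⟨s, hs, hqs⟩ := exists_lt_of_lt_csSup hSne hcq
      have h1 : μ (A (q : ℝ)) = 1 := by
        have hle : μ (A s) ≤ μ (A (q : ℝ)) := measure_mono (hmono hqs.le)
        rw [hs] at hle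
        exact le_antisymm prob_le_one hle
      have : μ (A (q : ℝ))ᶜ = 0 := by
        rw [measure_compl (hAmeas _) (measure_ne_top μ _), h1]; simp
      exact measure_mono_null (fun x hx => hx.2) this
    · exact measure_mono_null (fun x hx => (hcq hx.1).elim) (measure_empty (μ := μ))
  refine ⟨c, ?_⟩
  have : μ {x | φ x ≠ c} = 0 := by
    refine measure_mono_null (fun x hx => ?_) (measure_union_null hgt hlt)
    rcases lt_or_gt_of_ne (hx : φ x ≠ c) with h | h
    · exact Or.inr h
    · exact Or.inl h
  rw [Filter.eventuallyEq_iff_exists_mem]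
  exact ⟨{x | φ x = c}, by rwa [mem_ae_iff, compl_setOf], fun x hx => hx⟩

set_option maxHeartbeats 1600000 in
/-- Key finiteness: the space of intertwiners from a finite-dimensional invariant subspace
into `L²` is finite-dimensional, by ergodicity. -/
theorem interdim (hS : IsMeasurableAction S μ) (herg : IsErgodicAction S μ)
    (V : Submodule ℝ (Lp ℝ 2 μ)) (hVfd : FiniteDimensional ℝ V)
    (e : G → (V →ₗ[ℝ] V))
    (he : ∀ g (v : V), ((e g v : V) : Lp ℝ 2 μ) = koop (hS.2.2.2 g) (v : Lp ℝ 2 μ))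
    (II : Submodule ℝ (V →ₗ[ℝ] Lp ℝ 2 μ))
    (hII : ∀ T ∈ II, ∀ g (v : V), koop (hS.2.2.2 g) (T v) = T (e g v)) :
    FiniteDimensional ℝ ↥II := by
  classical
  haveI := hVfd
  set n : ℕ := Module.finrank ℝ V with hn
  set b : OrthonormalBasis (Fin n) ℝ V := stdOrthonormalBasis ℝ V with hb
  have key : ∀ (T : Fin (n + 1) → ↥II), ¬ LinearIndependent ℝ T := by
    intro T hT
    set fT : Fin (n + 1) → Fin n → Lp ℝ 2 μ := fun j i => (T j : V →ₗ[ℝ] Lp ℝ 2 μ) (b i)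
      with hfT
    set φ : Fin (n + 1) → Fin (n + 1) → X → ℝ :=
      fun j l x => ∑ i, (fT j i : X → ℝ) x * (fT l i : X → ℝ) x with hφ
    set B : Fin (n + 1) → Fin (n + 1) → ℝ := fun j l => ∑ i, ⟪fT j i, fT l i⟫ with hB
    have hφmeas : ∀ j l, Measurable (φ j l) := by
      intro j l
      refine Finset.measurable_sum _ fun i _ => Measurable.mul ?_ ?_ <;>
        exact (Lp.stronglyMeasurable _).measurable
    have hφinv : ∀ j l g, (fun x => φ j l (S g x)) =ᵐ[μ] φ j l := by
      intro j l g
      set A : Matrix (Fin n) (Fin n) ℝ := fun a i => ⟪b a, e g (b i)⟫ with hA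
      have hexp : ∀ i, e g (b i) = ∑ a, A a i • b a := by
        intro i
        conv_lhs => rw [← b.sum_repr (e g (b i))]
        exact Finset.sum_congr rfl fun a _ => by rw [b.repr_apply_apply]
      have hegi : ∀ v w : V, ⟪e g v, e g w⟫ = ⟪v, w⟫ := by
        intro v w
        rw [Submodule.coe_inner, he g v, he g w, koop_inner]
        rfl
      have hAAt : A * A.transpose = 1 := by
        rw [mul_eq_one_comm]
        ext i i'
        rw [Matrix.mul_apply, Matrix.one_apply]
        calc ∑ a, A.transpose i a * A a i' = ∑ a, ⟪e g (b i), b a⟫ * ⟪b a, e g (b i')⟫ := by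
              refine Finset.sum_congr rfl fun a _ => ?_
              rw [Matrix.transpose_apply, hA]
              simp only [real_inner_comm (b a) (e g (b i))]
          _ = ⟪e g (b i), e g (b i')⟫ := b.sum_inner_mul_inner _ _
          _ = ⟪b i, b i'⟫ := hegi _ _
          _ = if i = i' then 1 else 0 := orthonormal_iff_ite.1 b.orthonormal i i'
      have hcomp : ∀ (j' : Fin (n+1)) i, (fun x => (fT j' i : X → ℝ) (S g x)) =ᵐ[μ]
          fun x => ∑ a, A a i * (fT j' a : X → ℝ) x := by
        intro j' i
        have h1 : koop (hS.2.2.2 g) (fT j' i) = ∑ a, A a i • fT j' a := by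
          rw [hfT]
          rw [hII (T j') (T j').2 g (b i), hexp i, map_sum]
          exact Finset.sum_congr rfl fun a _ =>
            (T j' : V →ₗ[ℝ] Lp ℝ 2 μ).map_smul (A a i) (b a)
        have h2 := koop_coeFn (hS.2.2.2 g) (fT j' i)
        rw [h1] at h2
        exact h2.symm.trans (coeFn_sum_smul Finset.univ (fun a => A a i) (fT j'))
      have hae : ∀ᵐ x ∂μ, ∀ i, ((fun x => (fT j i : X → ℝ) (S g x)) x
            = ∑ a, A a i * (fT j a : X → ℝ) x)
          ∧ ((fun x => (fT l i : X → ℝ) (S g x)) x = ∑ a, A a i * (fT l a : X → ℝ) x) := by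
        rw [ae_all_iff]
        intro i
        filter_upwards [hcomp j i, hcomp l i] with x h1 h2 using ⟨h1, h2⟩
      filter_upwards [hae] with x hx
      show ∑ i, (fT j i : X → ℝ) (S g x) * (fT l i : X → ℝ) (S g x) = φ j l x
      calc ∑ i, (fT j i : X → ℝ) (S g x) * (fT l i : X → ℝ) (S g x)
          = ∑ i, (∑ a, A a i * (fT j a : X → ℝ) x) * (∑ a', A a' i * (fT l a' : X → ℝ) x) := by
            refine Finset.sum_congr rfl fun i _ => ?_
            rw [(hx i).1, (hx i).2]
        _ = ∑ a, (fT j a : X → ℝ) x * (fT l a : X → ℝ) x := gram_rotate A hAAt _ _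
        _ = φ j l x := rfl
    have hconst : ∀ j l, ∃ c : ℝ, φ j l =ᵐ[μ] fun _ => c :=
      fun j l => ae_eq_const_of_invariant hS herg (hφmeas j l) (hφinv j l)
    choose c hc using hconst
    have hcB : ∀ j l, c j l = B j l := by
      intro j l
      have hint : ∀ i : Fin n, Integrable (fun x => (fT j i : X → ℝ) x * (fT l i : X → ℝ) x) μ := by
        intro i
        have := MeasureTheory.L2.integrable_inner (𝕜 := ℝ) (fT l i) (fT j i)
        simpa [RCLike.inner_apply, starRingEnd_apply] using this
      have h1 : ∫ x, φ j l x ∂μ = B j l := by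
        rw [hφ]
        rw [MeasureTheory.integral_finset_sum _ fun i _ => hint i]
        refine Finset.sum_congr rfl fun i _ => ?_
        rw [MeasureTheory.L2.inner_def]
        refine integral_congr_ae (Filter.Eventually.of_forall fun x => ?_)
        simp [RCLike.inner_apply, starRingEnd_apply, mul_comm]
      have h2 : ∫ x, φ j l x ∂μ = c j l := by
        rw [integral_congr_ae (hc j l)]
        simp
      rw [← h2, h1]
    haveI : (ae μ).NeBot := ae_neBot.2 (IsProbabilityMeasure.ne_zero μ)
    have hgood : ∃ x₀, ∀ j l, φ j l x₀ = c j l := by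
      have : ∀ᵐ x ∂μ, ∀ j l, φ j l x = c j l := by
        rw [ae_all_iff]; intro j; rw [ae_all_iff]; intro l; exact hc j l
      exact this.exists
    obtain ⟨x₀, hx₀⟩ := hgood
    set v : Fin (n + 1) → (Fin n → ℝ) := fun j i => (fT j i : X → ℝ) x₀ with hv
    have hdep : ¬ LinearIndependent ℝ v := by
      intro hind
      have := hind.fintype_card_le_finrank
      simp [Module.finrank_fintype_fun_eq_card] at this
    rw [Fintype.not_linearIndependent_iff] at hdep
    obtain ⟨a, ha0, j₀, hj₀⟩ := hdep
    have hquad : ∑ j, ∑ l, a j * a l * B j l = 0 := by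
      have hz : ∀ i, ∑ j, a j * v j i = 0 := by
        intro i
        have := congr_fun ha0 i
        simpa [Finset.sum_apply] using this
      calc ∑ j, ∑ l, a j * a l * B j l
          = ∑ j, ∑ l, a j * a l * φ j l x₀ := by
            refine Finset.sum_congr rfl fun j _ => Finset.sum_congr rfl fun l _ => ?_
            rw [hx₀ j l, hcB]
        _ = ∑ j, ∑ l, ∑ i, (a j * v j i) * (a l * v l i) := by
            refine Finset.sum_congr rfl fun j _ => Finset.sum_congr rfl fun l _ => ?_
            rw [hφ, Finset.mul_sum]
            exact Finset.sum_congr rfl fun i _ => by rw [hv]; ring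
        _ = ∑ i, (∑ j, a j * v j i) * (∑ l, a l * v l i) := by
            have hsw : ∀ (F : Fin (n+1) → Fin (n+1) → Fin n → ℝ),
                ∑ j, ∑ l, ∑ i, F j l i = ∑ i, ∑ j, ∑ l, F j l i := by
              intro F
              refine (Finset.sum_congr rfl fun j _ => Finset.sum_comm).trans ?_
              exact Finset.sum_comm
            rw [hsw]
            refine Finset.sum_congr rfl fun i _ => ?_
            rw [Finset.sum_mul_sum]
        _ = 0 := by
            refine Finset.sum_eq_zero fun i _ => ?_
            rw [hz i, zero_mul]
    set SS : V →ₗ[ℝ] Lp ℝ 2 μ := ∑ j, a j • (T j : V →ₗ[ℝ] Lp ℝ 2 μ) with hSS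
    have happ : ∀ i, SS (b i) = ∑ j, a j • fT j i := by
      intro i
      rw [hSS, LinearMap.sum_apply]
      exact Finset.sum_congr rfl fun j _ => rfl
    have hinner : ∑ i, ⟪SS (b i), SS (b i)⟫ = ∑ j, ∑ l, a j * a l * B j l := by
      have h1 : ∀ i, ⟪SS (b i), SS (b i)⟫ = ∑ j, ∑ l, a j * a l * ⟪fT j i, fT l i⟫ := by
        intro i
        rw [happ i, sum_inner]
        refine Finset.sum_congr rfl fun j _ => ?_
        rw [real_inner_smul_left, inner_sum, Finset.mul_sum]
        refine Finset.sum_congr rfl fun l _ => ?_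
        rw [real_inner_smul_right]; ring
      rw [Finset.sum_congr rfl fun i _ => h1 i]
      have hsw : ∀ (F : Fin (n+1) → Fin (n+1) → Fin n → ℝ),
          ∑ i, ∑ j, ∑ l, F j l i = ∑ j, ∑ l, ∑ i, F j l i := by
        intro F
        refine Finset.sum_comm.trans ?_
        exact Finset.sum_congr rfl fun j _ => Finset.sum_comm
      rw [hsw fun j l i => a j * a l * ⟪fT j i, fT l i⟫]
      refine Finset.sum_congr rfl fun j _ => Finset.sum_congr rfl fun l _ => ?_
      rw [hB, ← Finset.mul_sum]
    have hSSz : ∀ i, SS (b i) = 0 := by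
      have hzero : ∑ i, ⟪SS (b i), SS (b i)⟫ = 0 := by rw [hinner, hquad]
      have hnn : ∀ i ∈ Finset.univ, (0:ℝ) ≤ ⟪SS (b i), SS (b i)⟫ :=
        fun i _ => real_inner_self_nonneg
      intro i
      have := (Finset.sum_eq_zero_iff_of_nonneg hnn).1 hzero i (Finset.mem_univ i)
      exact inner_self_eq_zero.1 this
    have hSz : SS = 0 := by
      apply b.toBasis.ext
      intro i
      simpa using hSSz i
    have : ∑ j, a j • T j = 0 := by
      apply Submodule.injective_subtype II
      have hmap : II.subtype (∑ j, a j • T j) = SS := by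
        rw [map_sum, hSS]
        exact Finset.sum_congr rfl fun j _ => by
          rw [LinearMap.map_smul]; rfl
      rw [hmap, hSz, map_zero]
    have := Fintype.linearIndependent_iff.1 hT a (by rw [this]) j₀
    exact hj₀ this
  have hrank : Module.rank ℝ ↥II ≤ n := by
    apply rank_le
    intro s hs
    by_contra hcard
    push_neg at hcard
    have hcards : n + 1 ≤ Fintype.card s := by rwa [Fintype.card_coe]
    set f : Fin (n + 1) → s := fun i => (Fintype.equivFin s).symm (Fin.castLE hcards i) with hfdef
    have hf : Function.Injective f :=
      (Fintype.equivFin s).symm.injective.comp (Fin.castLE_injective hcards)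
    exact key _ (hs.comp f hf)
  exact IsNoetherian.iff_fg.1 (IsNoetherian.iff_rank_lt_aleph0.2
    (lt_of_le_of_lt hrank (Cardinal.nat_lt_aleph0 n)))

set_option maxHeartbeats 2000000 in
/-- Every eigenfunction of `S₂` is an eigenfunction of the combined action. -/
theorem isEig_comb {S₁ S₂ : G → X → X}
    (h₁ : IsMeasurableAction S₁ μ) (h₂ : IsMeasurableAction S₂ μ)
    (hcomm : ∀ g h x, S₁ g (S₂ h x) = S₂ h (S₁ g x))
    (herg : IsErgodicAction S₂ μ) (F : Lp ℝ 2 μ) (hF : IsEigenfunction S₂ F) :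
    IsEigenfunction (fun g x => S₂ g (S₁ g x)) F := by
  classical
  obtain ⟨V, hVfd, hVinv, hFV⟩ := hF
  haveI := hVfd
  have hmp₂ : ∀ g, MeasurePreserving (S₂ g) μ μ := h₂.2.2.2
  have hmp₁ : ∀ g, MeasurePreserving (S₁ g) μ μ := h₁.2.2.2
  -- commutation of Koopman operators
  have hKcomm : ∀ g k (f : Lp ℝ 2 μ),
      koop (h₂.2.2.2 k) (koop (hmp₁ g) f) = koop (hmp₁ g) (koop (h₂.2.2.2 k) f) := by
    intro g k f
    apply Lp.ext
    filter_upwards [koop_coeFn (h₂.2.2.2 k) (koop (hmp₁ g) f),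
      (h₂.2.2.2 k).quasiMeasurePreserving.ae_eq_comp (koop_coeFn (hmp₁ g) f),
      koop_coeFn (hmp₁ g) (koop (h₂.2.2.2 k) f),
      (hmp₁ g).quasiMeasurePreserving.ae_eq_comp (koop_coeFn (h₂.2.2.2 k) f)]
      with x e1 e2 e3 e4
    simp only [Function.comp_apply] at e1 e2 e3 e4
    rw [e1, e2, e3, e4, hcomm g k x]
  -- composition law for the Koopman operators of S₁
  have hK₁mul : ∀ g k (f : Lp ℝ 2 μ),
      koop (hmp₁ k) (koop (hmp₁ g) f) = koop (hmp₁ (g * k)) f := by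
    intro g k f
    apply Lp.ext
    filter_upwards [koop_coeFn (hmp₁ k) (koop (hmp₁ g) f),
      (hmp₁ k).quasiMeasurePreserving.ae_eq_comp (koop_coeFn (hmp₁ g) f),
      koop_coeFn (hmp₁ (g * k)) f] with x e1 e2 e3
    simp only [Function.comp_apply] at e1 e2 e3
    rw [e1, e2, e3, h₁.2.2.1 g k x]
  have hK₁one : ∀ f : Lp ℝ 2 μ, koop (hmp₁ 1) f = f := by
    intro f
    apply Lp.ext
    filter_upwards [koop_coeFn (hmp₁ 1) f] with x e1
    rw [e1, h₁.2.1 x]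
  -- V is invariant under the Koopman operators of S₂
  have hK₂V : ∀ g (f : Lp ℝ 2 μ), f ∈ V → koop (h₂.2.2.2 g) f ∈ V := fun g f hf =>
    hVinv g f hf _ (koop_coeFn (h₂.2.2.2 g) f)
  -- restricted operators on V
  set e : G → (V →ₗ[ℝ] V) := fun g =>
    ((koop (h₂.2.2.2 g)).toLinearMap).restrict (p := V) (q := V)
      (fun f hf => hK₂V g f hf) with hedef
  have he : ∀ g (v : V), ((e g v : V) : Lp ℝ 2 μ) = koop (h₂.2.2.2 g) (v : Lp ℝ 2 μ) :=
    fun g v => LinearMap.restrict_coe_apply _ _ _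
  -- the intertwiner space
  set II : Submodule ℝ (V →ₗ[ℝ] Lp ℝ 2 μ) :=
    { carrier := {T | ∀ g (v : V), koop (h₂.2.2.2 g) (T v) = T (e g v)}
      add_mem' := by
        intro T T' hT hT' g v
        simp only [LinearMap.add_apply, map_add, hT g v, hT' g v]
      zero_mem' := by
        intro g v
        simp only [LinearMap.zero_apply, map_zero]
      smul_mem' := by
        intro r T hT g v
        rw [LinearMap.smul_apply, LinearMap.smul_apply,
          (koop (h₂.2.2.2 g)).map_smul r (T v), hT g v] } with hIIdef
  have hIIfd : FiniteDimensional ℝ ↥II := interdim h₂ herg V hVfd e he II (fun T hT => hT)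
  -- the restrictions of the Koopman operators of S₁ to V are intertwiners
  set Tg : G → (V →ₗ[ℝ] Lp ℝ 2 μ) := fun g =>
    ((koop (hmp₁ g)).toLinearMap).comp V.subtype with hTgdef
  have hTgII : ∀ g, Tg g ∈ II := by
    intro g k v
    show koop (h₂.2.2.2 k) (koop (hmp₁ g) (v : Lp ℝ 2 μ)) = koop (hmp₁ g) ((e k v : V) : Lp ℝ 2 μ)
    rw [hKcomm g k, he k v]
  -- the span of all S₁-translates of V
  set W : Submodule ℝ (Lp ℝ 2 μ) :=
    Submodule.span ℝ (⋃ g : G, (fun f => koop (hmp₁ g) f) '' (V : Set (Lp ℝ 2 μ))) with hWdef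
  -- W is finite dimensional
  haveI := hIIfd
  set m : ℕ := Module.finrank ℝ ↥II with hm
  set bI : Module.Basis (Fin m) ℝ ↥II := Module.finBasis ℝ ↥II with hbI
  set nV : ℕ := Module.finrank ℝ V with hnV
  set bV : Module.Basis (Fin nV) ℝ V := Module.finBasis ℝ V with hbV
  set M : Submodule ℝ (Lp ℝ 2 μ) :=
    Submodule.span ℝ (Set.range (fun p : Fin m × Fin nV =>
      ((bI p.1 : V →ₗ[ℝ] Lp ℝ 2 μ)) (bV p.2))) with hMdef
  haveI hMfd : FiniteDimensional ℝ ↥M :=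
    FiniteDimensional.span_of_finite ℝ (Set.finite_range _)
  have hTvM : ∀ (TT : ↥II) (v : V), (TT : V →ₗ[ℝ] Lp ℝ 2 μ) v ∈ M := by
    intro TT v
    have hTT : (TT : V →ₗ[ℝ] Lp ℝ 2 μ) = ∑ j, bI.repr TT j • (bI j : V →ₗ[ℝ] Lp ℝ 2 μ) := by
      have h0 := congrArg II.subtype (bI.sum_repr TT).symm
      rw [map_sum] at h0
      simpa using h0
    rw [hTT]
    rw [LinearMap.sum_apply]
    refine Submodule.sum_mem M fun j _ => ?_
    rw [LinearMap.smul_apply]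
    refine Submodule.smul_mem M _ ?_
    have hv : v = ∑ i, bV.repr v i • bV i := (bV.sum_repr v).symm
    rw [hv, map_sum]
    refine Submodule.sum_mem M fun i _ => ?_
    rw [LinearMap.map_smul]
    refine Submodule.smul_mem M _ ?_
    exact Submodule.subset_span ⟨(j, i), rfl⟩
  have hWM : W ≤ M := by
    rw [hWdef, Submodule.span_le]
    rintro f hf
    obtain ⟨s, ⟨g, rfl⟩, hfs⟩ := hf
    obtain ⟨v, hvV, rfl⟩ := hfs
    exact hTvM ⟨Tg g, hTgII g⟩ ⟨v, hvV⟩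
  haveI hWfd : FiniteDimensional ℝ ↥W := Submodule.finiteDimensional_of_le hWM
  -- V ⊆ W
  have hVW : ∀ f ∈ V, f ∈ W := by
    intro f hf
    have : f ∈ ⋃ g : G, (fun f => koop (hmp₁ g) f) '' (V : Set (Lp ℝ 2 μ)) := by
      refine Set.mem_iUnion.2 ⟨1, ⟨f, hf, ?_⟩⟩
      exact hK₁one f
    exact Submodule.subset_span this
  -- W is invariant under both Koopman families
  have hW₂ : ∀ k f, f ∈ W → koop (h₂.2.2.2 k) f ∈ W := by
    intro k f hfW
    have hle : W ≤ Submodule.comap ((koop (h₂.2.2.2 k)).toLinearMap) W := by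
      rw [hWdef, Submodule.span_le]
      rintro f' hf'
      obtain ⟨s, ⟨g, rfl⟩, hfs⟩ := hf'
      obtain ⟨v, hvV, rfl⟩ := hfs
      show koop (h₂.2.2.2 k) (koop (hmp₁ g) v) ∈ W
      rw [hKcomm g k v]
      refine Submodule.subset_span ?_
      exact Set.mem_iUnion.2 ⟨g, ⟨koop (h₂.2.2.2 k) v, hK₂V k v hvV, rfl⟩⟩
    exact hle hfW
  have hW₁ : ∀ k f, f ∈ W → koop (hmp₁ k) f ∈ W := by
    intro k f hfW
    have hle : W ≤ Submodule.comap ((koop (hmp₁ k)).toLinearMap) W := by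
      rw [hWdef, Submodule.span_le]
      rintro f' hf'
      obtain ⟨s, ⟨g, rfl⟩, hfs⟩ := hf'
      obtain ⟨v, hvV, rfl⟩ := hfs
      show koop (hmp₁ k) (koop (hmp₁ g) v) ∈ W
      rw [hK₁mul g k v]
      refine Submodule.subset_span ?_
      exact Set.mem_iUnion.2 ⟨g * k, ⟨v, hvV, rfl⟩⟩
    exact hle hfW
  -- conclude
  refine ⟨W, hWfd, ?_, hVW F hFV⟩
  intro g h hh h' hh'
  have hid : h' = koop (hmp₁ g) (koop (h₂.2.2.2 g) h) := by
    apply Lp.ext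
    filter_upwards [hh', koop_coeFn (hmp₁ g) (koop (h₂.2.2.2 g) h),
      (hmp₁ g).quasiMeasurePreserving.ae_eq_comp (koop_coeFn (h₂.2.2.2 g) h)] with x e1 e2 e3
    simp only [Function.comp_apply] at e1 e2 e3
    rw [e1, e2, e3]
  rw [hid]
  exact hW₁ g _ (hW₂ g h hh)

end main

end EigAux

/-- If `S₁` and `S₂` are commuting measure-preserving actions and `S₂` is ergodic, then
`Eig(S₂) ⊆ Eig(S₂S₁)`, where `S₂S₁` is the action `g ↦ S₂^g S₁^g`. -/
theorem eig_subset_of_product_ergodic {G X : Type*} [Group G] [TopologicalSpace G]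
    [IsTopologicalGroup G] [LocallyCompactSpace G] [SecondCountableTopology G]
    [MeasurableSpace G] [BorelSpace G]
    [MeasurableSpace X] (μ : Measure X) [IsProbabilityMeasure μ]
    (S₁ S₂ : G → X → X)
    (h₁ : IsMeasurableAction S₁ μ) (h₂ : IsMeasurableAction S₂ μ)
    (hcomm : ∀ g h x, S₁ g (S₂ h x) = S₂ h (S₁ g x))
    (herg : IsErgodicAction S₂ μ) :
    eigSpace μ S₂ ⊆ eigSpace μ (fun g x => S₂ g (S₁ g x)) := by
  classical
  set comb : G → X → X := fun g x => S₂ g (S₁ g x) with hcomb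
  set C : Submodule ℝ (Lp ℝ 2 μ) :=
    (Submodule.span ℝ {F : Lp ℝ 2 μ | IsEigenfunction comb F}).topologicalClosure with hC
  have hsub : {F : Lp ℝ 2 μ | IsEigenfunction S₂ F} ⊆ (C : Set (Lp ℝ 2 μ)) := by
    intro F hF
    have h1 : IsEigenfunction comb F := EigAux.isEig_comb h₁ h₂ hcomm herg F hF
    exact Submodule.le_topologicalClosure _ (Submodule.subset_span h1)
  have hspan : (Submodule.span ℝ {F : Lp ℝ 2 μ | IsEigenfunction S₂ F} : Set (Lp ℝ 2 μ))
      ⊆ (C : Set (Lp ℝ 2 μ)) := Submodule.span_le.2 hsub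
  have hclosed : IsClosed (C : Set (Lp ℝ 2 μ)) := Submodule.isClosed_topologicalClosure _
  have h2 : eigSpace μ S₂ ⊆ (C : Set (Lp ℝ 2 μ)) := closure_minimal hspan hclosed
  refine h2.trans ?_
  rw [hC]
  rw [Submodule.topologicalClosure_coe]
  exact subset_rfl
end
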